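/- Let Φ be symmetric with Φ ⪰ δI for δ > 0 and A : ℝ^d → ℝ^d be β-restricted cocoercive (relative to a reference point ϖ̲): ⟨ϖ − ϖ̲, Aϖ − Aϖ̲⟩ ≥ β‖Aϖ − Aϖ̲‖². Then T₁ = Id − Φ^{-1}A satisfies, in the Φ-induced norm, ‖T₁ϖ − T₁ϖ̲‖_Φ² ≤ ‖ϖ − ϖ̲‖_Φ² − (2βδ − 1)‖(ϖ − ϖ̲) − (T₁ϖ − T₁ϖ̲)‖_Φ². In particular, if βδ > 1/2, T₁ is restricted nonexpansive in ‖·‖_Φ. -/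

import Mathlib

open Matrix

/-- Lemma 7(ii) abstractly: if `Φ` is symmetric with `Φ ⪰ δI`, `δ > 0`, and
`A` is `β`-restricted cocoercive relative to `ϖ̲`, then `T₁ = Id − Φ⁻¹A`
satisfies, in the `Φ`-induced norm `‖v‖_Φ² = vᵀΦv`,
`‖T₁ϖ − T₁ϖ̲‖_Φ² ≤ ‖ϖ − ϖ̲‖_Φ² − (2βδ − 1)‖(ϖ−ϖ̲) − (T₁ϖ−T₁ϖ̲)‖_Φ²`;
in particular `T₁` is restricted nonexpansive in `‖·‖_Φ` when `βδ > 1/2`. -/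
theorem stmt_11 {d : ℕ} (Φ : Matrix (Fin d) (Fin d) ℝ)
    (hΦsymm : Φ.IsSymm) (δ : ℝ) (hδ : 0 < δ)
    (hΦδ : ∀ v : Fin d → ℝ, δ * (v ⬝ᵥ v) ≤ v ⬝ᵥ (Φ *ᵥ v))
    (A : (Fin d → ℝ) → (Fin d → ℝ)) (β : ℝ) (hβ : 0 < β)
    (ϖl : Fin d → ℝ)
    (hcoco : ∀ ϖ : Fin d → ℝ,
      β * ((A ϖ - A ϖl) ⬝ᵥ (A ϖ - A ϖl)) ≤ (ϖ - ϖl) ⬝ᵥ (A ϖ - A ϖl)) :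
    (∀ ϖ : Fin d → ℝ,
      ((ϖ - Φ⁻¹ *ᵥ A ϖ) - (ϖl - Φ⁻¹ *ᵥ A ϖl)) ⬝ᵥ
          (Φ *ᵥ ((ϖ - Φ⁻¹ *ᵥ A ϖ) - (ϖl - Φ⁻¹ *ᵥ A ϖl))) ≤
        (ϖ - ϖl) ⬝ᵥ (Φ *ᵥ (ϖ - ϖl)) -
          (2 * β * δ - 1) *
            (((ϖ - ϖl) - ((ϖ - Φ⁻¹ *ᵥ A ϖ) - (ϖl - Φ⁻¹ *ᵥ A ϖl))) ⬝ᵥ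
              (Φ *ᵥ ((ϖ - ϖl) - ((ϖ - Φ⁻¹ *ᵥ A ϖ) - (ϖl - Φ⁻¹ *ᵥ A ϖl)))))) ∧
    (β * δ > 1 / 2 → ∀ ϖ : Fin d → ℝ,
      ((ϖ - Φ⁻¹ *ᵥ A ϖ) - (ϖl - Φ⁻¹ *ᵥ A ϖl)) ⬝ᵥ
          (Φ *ᵥ ((ϖ - Φ⁻¹ *ᵥ A ϖ) - (ϖl - Φ⁻¹ *ᵥ A ϖl))) ≤
        (ϖ - ϖl) ⬝ᵥ (Φ *ᵥ (ϖ - ϖl))) := by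
  have hnn : ∀ v : Fin d → ℝ, 0 ≤ v ⬝ᵥ v := fun v =>
    Finset.sum_nonneg fun i _ => mul_self_nonneg _
  have hQnn : ∀ v : Fin d → ℝ, 0 ≤ v ⬝ᵥ (Φ *ᵥ v) := fun v =>
    le_trans (mul_nonneg hδ.le (hnn v)) (hΦδ v)
  have hHerm : Φ.IsHermitian := by
    rw [Matrix.IsHermitian, conjTranspose_eq_transpose_of_trivial]; exact hΦsymm
  have hPD : Φ.PosDef := by
    refine Matrix.PosDef.of_dotProduct_mulVec_pos hHerm (fun x hx => ?_)
    have h1 : 0 < x ⬝ᵥ x := by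
      rcases Function.ne_iff.mp hx with ⟨i, hi⟩
      have : 0 < x i * x i := mul_self_pos.mpr hi
      exact Finset.sum_pos' (fun j _ => mul_self_nonneg _) ⟨i, Finset.mem_univ i, this⟩
    have := hΦδ x
    simp only [star_trivial]
    nlinarith
  have hdet : IsUnit Φ.det := isUnit_iff_ne_zero.mpr (ne_of_gt hPD.det_pos)
  have hinv : Φ * Φ⁻¹ = 1 := Matrix.mul_nonsing_inv Φ hdet
  have hsym : ∀ a b : Fin d → ℝ, a ⬝ᵥ (Φ *ᵥ b) = b ⬝ᵥ (Φ *ᵥ a) := by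
    intro a b
    rw [Matrix.dotProduct_mulVec, ← Matrix.mulVec_transpose, hΦsymm, dotProduct_comm]
  have key : ∀ ϖ : Fin d → ℝ,
      ((ϖ - Φ⁻¹ *ᵥ A ϖ) - (ϖl - Φ⁻¹ *ᵥ A ϖl)) ⬝ᵥ
          (Φ *ᵥ ((ϖ - Φ⁻¹ *ᵥ A ϖ) - (ϖl - Φ⁻¹ *ᵥ A ϖl))) ≤
        (ϖ - ϖl) ⬝ᵥ (Φ *ᵥ (ϖ - ϖl)) -
          (2 * β * δ - 1) *
            (((ϖ - ϖl) - ((ϖ - Φ⁻¹ *ᵥ A ϖ) - (ϖl - Φ⁻¹ *ᵥ A ϖl))) ⬝ᵥ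
              (Φ *ᵥ ((ϖ - ϖl) - ((ϖ - Φ⁻¹ *ᵥ A ϖ) - (ϖl - Φ⁻¹ *ᵥ A ϖl))))) := by
    intro ϖ
    set u := ϖ - ϖl with hu
    set w := A ϖ - A ϖl with hw
    set z := Φ⁻¹ *ᵥ w with hzdef
    have hz : Φ *ᵥ z = w := by
      rw [hzdef, Matrix.mulVec_mulVec, hinv, Matrix.one_mulVec]
    have hT : (ϖ - Φ⁻¹ *ᵥ A ϖ) - (ϖl - Φ⁻¹ *ᵥ A ϖl) = u - z := by
      rw [hzdef, hw, Matrix.mulVec_sub, hu]; abel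
    have hT2 : u - (u - z) = z := by abel
    rw [hT, hT2]
    -- scalar facts
    have h1 : β * (w ⬝ᵥ w) ≤ u ⬝ᵥ w := hcoco ϖ
    have h2 : δ * (z ⬝ᵥ z) ≤ z ⬝ᵥ w := by have := hΦδ z; rwa [hz] at this
    have h3 : ∀ t : ℝ, 0 ≤ (w - t • z) ⬝ᵥ (w - t • z) := fun t => hnn _
    have h4 : δ * (z ⬝ᵥ w) ≤ w ⬝ᵥ w := by
      have := h3 δ
      simp only [dotProduct_sub, sub_dotProduct, dotProduct_smul,
        smul_dotProduct, smul_eq_mul] at this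
      nlinarith [dotProduct_comm z w]
    -- expand quadratic forms
    have expand : (u - z) ⬝ᵥ (Φ *ᵥ (u - z)) =
        u ⬝ᵥ (Φ *ᵥ u) - 2 * (u ⬝ᵥ w) + z ⬝ᵥ w := by
      rw [Matrix.mulVec_sub, hz]
      simp only [dotProduct_sub, sub_dotProduct]
      rw [hsym z u, hz]
      ring
    have h5 : z ⬝ᵥ (Φ *ᵥ z) = z ⬝ᵥ w := by rw [hz]
    rw [expand, h5]
    nlinarith [h1, h4, hβ, hδ]
  refine ⟨key, fun hβδ ϖ => le_trans (key ϖ) ?_⟩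
  have : 0 ≤ (2 * β * δ - 1) *
      (((ϖ - ϖl) - ((ϖ - Φ⁻¹ *ᵥ A ϖ) - (ϖl - Φ⁻¹ *ᵥ A ϖl))) ⬝ᵥ
        (Φ *ᵥ ((ϖ - ϖl) - ((ϖ - Φ⁻¹ *ᵥ A ϖ) - (ϖl - Φ⁻¹ *ᵥ A ϖl))))) := by
    apply mul_nonneg (by linarith) (hQnn _)
  linarith
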